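/- Let d ≥ 1, p ∈ (1,∞), s ∈ (0,1), m > 1, and let Ω ⊂ ℝ^d be open and bounded. Let v₀ ∈ W^{s,p}_0(Ω) ∩ L^∞(Ω), let ε > 0, and suppose v ∈ L^∞(Ω) (extended by 0 outside Ω) satisfies ⟦v⟧^m ∈ W^{s,p}_0(Ω) and ∫_Ω (v − β(v₀))(⟦v⟧^m − v₀) dx + ε·E(⟦v⟧^m, ⟦v⟧^m − v₀) = 0. Then there is a constant C > 0, depending only on m and p, such that ‖v − β(v₀)‖_{L^{m+1}(Ω)}^{m+1} ≤ C·ε·‖v₀‖_{W^{s,p}_0(Ω)}^p. -/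

import Mathlib

open MeasureTheory ENNReal

/-- Signed power: `spow r x = |x|^(r-1) * x`. -/
noncomputable def spow (r x : ℝ) : ℝ := |x| ^ (r - 1) * x

lemma measurable_abs_rpow (c : ℝ) : Measurable fun x : ℝ => |x| ^ c := by
  have h : (fun x : ℝ => |x| ^ c) =
      fun x => if x = 0 then (0 : ℝ) ^ c else Real.exp (Real.log |x| * c) := by
    funext x
    by_cases hx : x = 0
    · simp [hx]
    · rw [if_neg hx, Real.rpow_def_of_pos (abs_pos.2 hx)]
  rw [h]
  refine Measurable.ite ?_ measurable_const ?_
  · simpa using measurableSet_singleton (0 : ℝ)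
  · exact ((Real.measurable_log.comp measurable_abs).mul_const c).exp

lemma measurable_spow (r : ℝ) : Measurable (spow r) :=
  (measurable_abs_rpow (r - 1)).mul measurable_id

lemma abs_spow {r : ℝ} (hr : 0 < r) (x : ℝ) : |spow r x| = |x| ^ r := by
  by_cases hx : x = 0
  · simp [spow, hx, Real.zero_rpow hr.ne']
  · have h0 : |x| ≠ 0 := abs_ne_zero.2 hx
    rw [spow, abs_mul, abs_of_nonneg (Real.rpow_nonneg (abs_nonneg x) _),
      ← Real.rpow_add_one h0]
    ring_nf

lemma spow_of_nonneg {r x : ℝ} (hr : 0 < r) (hx : 0 ≤ x) : spow r x = x ^ r := by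
  rcases eq_or_lt_of_le hx with h | h
  · simp [spow, ← h, Real.zero_rpow hr.ne']
  · rw [spow, abs_of_pos h, ← Real.rpow_add_one h.ne']
    ring_nf

lemma spow_neg (r x : ℝ) : spow r (-x) = -spow r x := by
  simp [spow, abs_neg, mul_neg]

lemma spow_spow_inv {m : ℝ} (hm : 1 < m) (t : ℝ) : spow m (spow m⁻¹ t) = t := by
  have hm0 : (0:ℝ) < m := by linarith
  by_cases ht : t = 0
  · simp [spow, ht]
  · have h0 : (0:ℝ) < |t| := abs_pos.2 ht
    have habs : |spow m⁻¹ t| = |t| ^ m⁻¹ := abs_spow (by positivity) t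
    rw [spow, habs, spow]
    calc (|t| ^ m⁻¹) ^ (m - 1) * (|t| ^ (m⁻¹ - 1) * t)
        = (|t| ^ (m⁻¹ * (m - 1)) * |t| ^ (m⁻¹ - 1)) * t := by
          rw [← Real.rpow_mul h0.le]; ring
      _ = |t| ^ (m⁻¹ * (m - 1) + (m⁻¹ - 1)) * t := by rw [Real.rpow_add h0]
      _ = t := by
          have hz : m⁻¹ * (m - 1) + (m⁻¹ - 1) = 0 := by field_simp; ring
          rw [hz, Real.rpow_zero, one_mul]

lemma real_add_rpow_le {m x y : ℝ} (hx : 0 ≤ x) (hy : 0 ≤ y) (hm : 1 ≤ m) :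
    x ^ m + y ^ m ≤ (x + y) ^ m := by
  have h := NNReal.add_rpow_le_rpow_add x.toNNReal y.toNNReal hm
  have h' := NNReal.coe_le_coe.2 h
  rw [NNReal.coe_add, NNReal.coe_rpow, NNReal.coe_rpow, NNReal.coe_rpow, NNReal.coe_add,
    Real.coe_toNNReal x hx, Real.coe_toNNReal y hy] at h'
  exact h'

lemma real_rpow_add_le {m x y : ℝ} (hx : 0 ≤ x) (hy : 0 ≤ y) (hm : 1 ≤ m) :
    (x + y) ^ m ≤ 2 ^ (m - 1) * (x ^ m + y ^ m) := by
  have h := NNReal.rpow_add_le_mul_rpow_add_rpow x.toNNReal y.toNNReal hm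
  have h' := NNReal.coe_le_coe.2 h
  push_cast at h'
  rw [Real.coe_toNNReal x hx, Real.coe_toNNReal y hy] at h'
  exact h'

lemma key_half {m a b : ℝ} (hm : 1 < m) (hab : b ≤ a) :
    2 ^ (1 - m) * (a - b) ^ m ≤ spow m a - spow m b := by
  have hm0 : (0:ℝ) < m := by linarith
  have ht : (0:ℝ) ≤ a - b := sub_nonneg.2 hab
  have h2 : (2:ℝ) ^ (1 - m) ≤ 1 :=
    Real.rpow_le_one_of_one_le_of_nonpos one_le_two (by linarith)
  have h2n : (0:ℝ) ≤ (2:ℝ) ^ (1 - m) := Real.rpow_nonneg (by norm_num) _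
  have htm : (0:ℝ) ≤ (a - b) ^ m := Real.rpow_nonneg ht m
  rcases le_or_gt 0 b with hb | hb
  · have ha : (0:ℝ) ≤ a := hb.trans hab
    rw [spow_of_nonneg hm0 ha, spow_of_nonneg hm0 hb]
    have h1 : (a - b) ^ m + b ^ m ≤ a ^ m := by
      have := real_add_rpow_le ht hb hm.le
      rwa [sub_add_cancel] at this
    nlinarith
  · rcases le_or_gt a 0 with ha | ha
    · have hsa : spow m a = -(-a) ^ m := by
        rw [← spow_of_nonneg hm0 (neg_nonneg.2 ha), ← spow_neg, neg_neg]
      have hsb : spow m b = -(-b) ^ m := by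
        rw [← spow_of_nonneg hm0 (neg_nonneg.2 hb.le), ← spow_neg, neg_neg]
      rw [hsa, hsb]
      have h1 : (a - b) ^ m + (-a) ^ m ≤ (-b) ^ m := by
        have := real_add_rpow_le ht (neg_nonneg.2 ha) hm.le
        rwa [show a - b + -a = -b by ring] at this
      nlinarith
    · have hsa : spow m a = a ^ m := spow_of_nonneg hm0 ha.le
      have hsb : spow m b = -(-b) ^ m := by
        rw [← spow_of_nonneg hm0 (neg_nonneg.2 hb.le), ← spow_neg, neg_neg]
      rw [hsa, hsb]
      have h1 : (a - b) ^ m ≤ 2 ^ (m - 1) * (a ^ m + (-b) ^ m) := by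
        have := real_rpow_add_le ha.le (neg_nonneg.2 hb.le) hm.le
        rwa [show a + -b = a - b by ring] at this
      have h2m : (2:ℝ) ^ (1 - m) * 2 ^ (m - 1) = 1 := by
        rw [← Real.rpow_add two_pos]; norm_num
      calc 2 ^ (1 - m) * (a - b) ^ m
          ≤ 2 ^ (1 - m) * (2 ^ (m - 1) * (a ^ m + (-b) ^ m)) :=
            mul_le_mul_of_nonneg_left h1 h2n
        _ = (2 ^ (1 - m) * 2 ^ (m - 1)) * (a ^ m + (-b) ^ m) := by ring
        _ = a ^ m - -(-b) ^ m := by rw [h2m]; ring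

lemma key_m {m : ℝ} (hm : 1 < m) (a b : ℝ) :
    2 ^ (1 - m) * |a - b| ^ (m + 1) ≤ (a - b) * (spow m a - spow m b) := by
  have h2n : (0:ℝ) ≤ (2:ℝ) ^ (1 - m) := Real.rpow_nonneg (by norm_num) _
  have main : ∀ x y : ℝ, y ≤ x →
      2 ^ (1 - m) * |x - y| ^ (m + 1) ≤ (x - y) * (spow m x - spow m y) := by
    intro x y hxy
    have ht : (0:ℝ) ≤ x - y := sub_nonneg.2 hxy
    have hk := key_half hm hxy
    rw [abs_of_nonneg ht]
    rcases eq_or_lt_of_le ht with h | h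
    · rw [← h, Real.zero_rpow (by positivity)]
      simp
    · have hpow : (x - y) ^ (m + 1) = (x - y) ^ m * (x - y) := by
        rw [Real.rpow_add_one h.ne']
      rw [hpow]
      calc 2 ^ (1 - m) * ((x - y) ^ m * (x - y))
          = (2 ^ (1 - m) * (x - y) ^ m) * (x - y) := by ring
        _ ≤ (spow m x - spow m y) * (x - y) := mul_le_mul_of_nonneg_right hk ht
        _ = (x - y) * (spow m x - spow m y) := by ring
  rcases le_total b a with h | h
  · exact main a b h
  · have := main b a h
    rw [abs_sub_comm] at this
    calc 2 ^ (1 - m) * |a - b| ^ (m + 1) ≤ (b - a) * (spow m b - spow m a) := this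
      _ = (a - b) * (spow m a - spow m b) := by ring

lemma key_p {p : ℝ} (hp : 1 < p) (A B : ℝ) :
    0 ≤ spow (p - 1) A * (A - B) + |B| ^ p / p := by
  have hp0 : (0:ℝ) < p := by linarith
  have hq : p.HolderConjugate (Real.conjExponent p) := .conjExponent hp
  set q : ℝ := Real.conjExponent p with hqdef
  have hA : spow (p - 1) A * A = |A| ^ p := by
    by_cases hA0 : A = 0
    · simp [spow, hA0, Real.zero_rpow hp0.ne']
    · have h0 : (0:ℝ) < |A| := abs_pos.2 hA0
      calc spow (p - 1) A * A = |A| ^ (p - 2) * (A * A) := by rw [spow]; ring_nf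
        _ = |A| ^ (p - 2) * (|A| * |A|) := by rw [abs_mul_abs_self]
        _ = |A| ^ (p - 2 + 1 + 1) := by
            rw [Real.rpow_add h0, Real.rpow_add h0, Real.rpow_one]; ring
        _ = |A| ^ p := by ring_nf
  have habs : |spow (p - 1) A| = |A| ^ (p - 1) := abs_spow (by linarith) A
  have hyoung : |A| ^ (p - 1) * |B| ≤ (|A| ^ (p - 1)) ^ q / q + |B| ^ p / p :=
    Real.young_inequality_of_nonneg (Real.rpow_nonneg (abs_nonneg A) _) (abs_nonneg B) hq.symm
  have hqA : (|A| ^ (p - 1)) ^ q = |A| ^ p := by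
    rw [← Real.rpow_mul (abs_nonneg A), hq.sub_one_mul_conj]
  have hdiv : |A| ^ p / q ≤ |A| ^ p :=
    div_le_self (Real.rpow_nonneg (abs_nonneg A) _) hq.symm.lt.le
  have hb : spow (p - 1) A * B ≤ |A| ^ (p - 1) * |B| := by
    calc spow (p - 1) A * B ≤ |spow (p - 1) A * B| := le_abs_self _
      _ = |A| ^ (p - 1) * |B| := by rw [abs_mul, habs]
  have hexpand : spow (p - 1) A * (A - B) = |A| ^ p - spow (p - 1) A * B := by
    rw [mul_sub, hA]
  rw [hqA] at hyoung
  linarith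

lemma measurable_rpow_const_of_nonneg {α : Type*} [MeasurableSpace α] {f : α → ℝ}
    (hf : Measurable f) (h0 : ∀ x, 0 ≤ f x) (c : ℝ) : Measurable fun x => f x ^ c := by
  have h : (fun x => f x ^ c) = fun x => |f x| ^ c := by
    funext x; rw [abs_of_nonneg (h0 x)]
  rw [h]
  exact (measurable_abs_rpow c).comp hf

lemma ae_bound_of_memLpTop {α : Type*} [MeasurableSpace α] {μ : Measure α} {f : α → ℝ}
    (hf : MemLp f ⊤ μ) : ∃ M : ℝ, 0 ≤ M ∧ ∀ᵐ x ∂μ, |f x| ≤ M := by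
  refine ⟨(eLpNormEssSup f μ).toReal, ENNReal.toReal_nonneg, ?_⟩
  have hlt : eLpNormEssSup f μ < ⊤ := by
    rw [← eLpNorm_exponent_top]; exact hf.2
  filter_upwards [ae_le_eLpNormEssSup (f := f) (μ := μ)] with x hx
  calc |f x| = ((‖f x‖₊ : ℝ≥0∞)).toReal := by simp [Real.norm_eq_abs]
    _ ≤ (eLpNormEssSup f μ).toReal := ENNReal.toReal_mono hlt.ne hx

/-- Fractional p-Laplacian pairing
`E(u,φ) = ∫∫ ⟦u(x)−u(y)⟧^{p−1}(φ(x)−φ(y)) |x−y|^{−(d+sp)} dx dy`. -/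
noncomputable def fracPairing (d : ℕ) (s p : ℝ)
    (u φ : EuclideanSpace ℝ (Fin d) → ℝ) : ℝ :=
  ∫ z : EuclideanSpace ℝ (Fin d) × EuclideanSpace ℝ (Fin d),
    spow (p - 1) (u z.1 - u z.2) * (φ z.1 - φ z.2) / ‖z.1 - z.2‖ ^ ((d : ℝ) + s * p)

/-- Gagliardo seminorm to the `p`-th power, as an extended nonnegative real. -/
noncomputable def gagliardo (d : ℕ) (s p : ℝ)
    (u : EuclideanSpace ℝ (Fin d) → ℝ) : ℝ≥0∞ :=
  ∫⁻ z : EuclideanSpace ℝ (Fin d) × EuclideanSpace ℝ (Fin d),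
    ENNReal.ofReal (|u z.1 - u z.2| ^ p / ‖z.1 - z.2‖ ^ ((d : ℝ) + s * p))

/-- Membership in `W^{s,p}_0(Ω)`. -/
def memW0 (d : ℕ) (s p : ℝ) (Ω : Set (EuclideanSpace ℝ (Fin d)))
    (u : EuclideanSpace ℝ (Fin d) → ℝ) : Prop :=
  Measurable u ∧ MemLp u (ENNReal.ofReal p) volume ∧
    gagliardo d s p u < ⊤ ∧ ∀ᵐ x, x ∉ Ω → u x = 0

/-- quantitative estimate for the elliptic regularization
`v + ε(−Δ)^s_p⟦v⟧^m = β(v₀)`: `‖v − β(v₀)‖_{L^{m+1}(Ω)}^{m+1} ≤ C ε ‖v₀‖_{W^{s,p}_0}^p`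
with `C` depending only on `m` and `p`. -/
theorem stmt12 (m p : ℝ) (hm : 1 < m) (hp : 1 < p) :
    ∃ C : ℝ, 0 < C ∧
      ∀ (d : ℕ), 1 ≤ d → ∀ (s : ℝ), s ∈ Set.Ioo (0 : ℝ) 1 →
      ∀ (Ω : Set (EuclideanSpace ℝ (Fin d))), IsOpen Ω → Bornology.IsBounded Ω →
      ∀ (v₀ : EuclideanSpace ℝ (Fin d) → ℝ),
        memW0 d s p Ω v₀ → MemLp v₀ ⊤ (volume.restrict Ω) →
      ∀ (ε : ℝ), 0 < ε →
      ∀ (v : EuclideanSpace ℝ (Fin d) → ℝ),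
        Measurable v → MemLp v ⊤ volume → (∀ᵐ x, x ∉ Ω → v x = 0) →
        memW0 d s p Ω (fun x => spow m (v x)) →
        ((∫ x in Ω, (v x - spow m⁻¹ (v₀ x)) * (spow m (v x) - v₀ x)) +
            ε * fracPairing d s p (fun x => spow m (v x))
              (fun x => spow m (v x) - v₀ x) = 0) →
        (∫ x in Ω, |v x - spow m⁻¹ (v₀ x)| ^ (m + 1)) ≤
          C * ε * (gagliardo d s p v₀).toReal := by
  have hC : (0:ℝ) < 2 ^ (m - 1) := Real.rpow_pos_of_pos two_pos _
  refine ⟨2 ^ (m - 1), hC, ?_⟩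
  intro d _hd s _hs Ω _hΩo hΩb v₀ hv₀ hv₀top ε hε v hvm hvtop _hv0 _hwmem heq
  obtain ⟨hv₀m, _, hv₀gag, _⟩ := hv₀
  have hp0 : (0:ℝ) < p := by linarith
  have hm0 : (0:ℝ) < m := by linarith
  set T := (gagliardo d s p v₀).toReal with hT
  have hTnn : 0 ≤ T := ENNReal.toReal_nonneg
  -- kernel-side bound
  have hKnn : ∀ z : EuclideanSpace ℝ (Fin d) × EuclideanSpace ℝ (Fin d),
      (0:ℝ) ≤ ‖z.1 - z.2‖ ^ ((d : ℝ) + s * p) := fun z => Real.rpow_nonneg (norm_nonneg _) _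
  have hGmeas : Measurable (fun z : EuclideanSpace ℝ (Fin d) × EuclideanSpace ℝ (Fin d) =>
      |v₀ z.1 - v₀ z.2| ^ p / ‖z.1 - z.2‖ ^ ((d:ℝ) + s*p)) := by
    apply Measurable.div
    · exact (measurable_abs_rpow p).comp
        ((hv₀m.comp measurable_fst).sub (hv₀m.comp measurable_snd))
    · exact measurable_rpow_const_of_nonneg ((measurable_fst.sub measurable_snd).norm)
        (fun z => norm_nonneg _) _
  have hGnn : ∀ z : EuclideanSpace ℝ (Fin d) × EuclideanSpace ℝ (Fin d),
      0 ≤ |v₀ z.1 - v₀ z.2| ^ p / ‖z.1 - z.2‖ ^ ((d:ℝ) + s*p) := fun z =>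
    div_nonneg (Real.rpow_nonneg (abs_nonneg _) _) (hKnn z)
  have hGint : Integrable (fun z : EuclideanSpace ℝ (Fin d) × EuclideanSpace ℝ (Fin d) =>
      p⁻¹ * (|v₀ z.1 - v₀ z.2| ^ p / ‖z.1 - z.2‖ ^ ((d:ℝ)+s*p))) volume := by
    constructor
    · exact (hGmeas.const_mul _).aestronglyMeasurable
    · rw [hasFiniteIntegral_iff_ofReal
        (Filter.Eventually.of_forall fun z => mul_nonneg (by positivity) (hGnn z))]
      have hmul : ∀ z : EuclideanSpace ℝ (Fin d) × EuclideanSpace ℝ (Fin d),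
          ENNReal.ofReal (p⁻¹ * (|v₀ z.1 - v₀ z.2| ^ p / ‖z.1 - z.2‖ ^ ((d:ℝ)+s*p)))
          = ENNReal.ofReal p⁻¹
            * ENNReal.ofReal (|v₀ z.1 - v₀ z.2| ^ p / ‖z.1 - z.2‖ ^ ((d:ℝ)+s*p)) :=
        fun z => ENNReal.ofReal_mul (by positivity)
      simp_rw [hmul]
      rw [lintegral_const_mul _ hGmeas.ennreal_ofReal]
      exact ENNReal.mul_lt_top ENNReal.ofReal_lt_top hv₀gag
  have hGval : (∫ z : EuclideanSpace ℝ (Fin d) × EuclideanSpace ℝ (Fin d),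
      p⁻¹ * (|v₀ z.1 - v₀ z.2| ^ p / ‖z.1 - z.2‖ ^ ((d:ℝ)+s*p))) = p⁻¹ * T := by
    rw [integral_const_mul]
    congr 1
    rw [integral_eq_lintegral_of_nonneg_ae (Filter.Eventually.of_forall hGnn)
      hGmeas.aestronglyMeasurable]
    rfl
  have hfrac : -(fracPairing d s p (fun x => spow m (v x)) (fun x => spow m (v x) - v₀ x))
      ≤ p⁻¹ * T := by
    have hFP : fracPairing d s p (fun x => spow m (v x)) (fun x => spow m (v x) - v₀ x)
        = ∫ z : EuclideanSpace ℝ (Fin d) × EuclideanSpace ℝ (Fin d),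
            spow (p-1) (spow m (v z.1) - spow m (v z.2))
              * ((spow m (v z.1) - v₀ z.1) - (spow m (v z.2) - v₀ z.2))
              / ‖z.1 - z.2‖ ^ ((d:ℝ)+s*p) := rfl
    set F := fun z : EuclideanSpace ℝ (Fin d) × EuclideanSpace ℝ (Fin d) =>
      spow (p-1) (spow m (v z.1) - spow m (v z.2))
        * ((spow m (v z.1) - v₀ z.1) - (spow m (v z.2) - v₀ z.2))
        / ‖z.1 - z.2‖ ^ ((d:ℝ)+s*p) with hFdef
    have hpt : ∀ z : EuclideanSpace ℝ (Fin d) × EuclideanSpace ℝ (Fin d),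
        0 ≤ F z + p⁻¹ * (|v₀ z.1 - v₀ z.2| ^ p / ‖z.1 - z.2‖ ^ ((d:ℝ)+s*p)) := by
      intro z
      have hkey := key_p hp (spow m (v z.1) - spow m (v z.2)) (v₀ z.1 - v₀ z.2)
      have hre : F z + p⁻¹ * (|v₀ z.1 - v₀ z.2| ^ p / ‖z.1 - z.2‖ ^ ((d:ℝ)+s*p))
          = (spow (p-1) (spow m (v z.1) - spow m (v z.2))
              * ((spow m (v z.1) - spow m (v z.2)) - (v₀ z.1 - v₀ z.2))
              + |v₀ z.1 - v₀ z.2| ^ p / p) / ‖z.1 - z.2‖ ^ ((d:ℝ)+s*p) := by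
        rw [hFdef]
        ring
      rw [hre]
      exact div_nonneg hkey (hKnn z)
    by_cases hFi : Integrable F volume
    · have h0 : 0 ≤ ∫ z, (F z
          + p⁻¹ * (|v₀ z.1 - v₀ z.2| ^ p / ‖z.1 - z.2‖ ^ ((d:ℝ)+s*p))) :=
        integral_nonneg hpt
      rw [integral_add hFi hGint] at h0
      rw [hFP]
      rw [hGval] at h0
      linarith
    · rw [hFP, integral_undef hFi, neg_zero]
      positivity
  -- space-side
  haveI : IsFiniteMeasure (volume.restrict Ω) :=
    ⟨by rw [Measure.restrict_apply_univ]; exact hΩb.measure_lt_top⟩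
  obtain ⟨Mv, hMv0, hMvae⟩ := ae_bound_of_memLpTop hvtop
  have hMv' : ∀ᵐ x ∂(volume.restrict Ω), |v x| ≤ Mv := ae_restrict_of_ae hMvae
  obtain ⟨M0, hM00, hM0⟩ := ae_bound_of_memLpTop hv₀top
  set f := fun x => (v x - spow m⁻¹ (v₀ x)) * (spow m (v x) - v₀ x) with hf
  have hfm : Measurable f :=
    (hvm.sub ((measurable_spow m⁻¹).comp hv₀m)).mul
      (((measurable_spow m).comp hvm).sub hv₀m)
  have hbound : ∀ᵐ x ∂(volume.restrict Ω),
      ‖f x‖ ≤ (Mv + M0 ^ m⁻¹) * (Mv ^ m + M0) := by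
    filter_upwards [hMv', hM0] with x h1 h2
    rw [Real.norm_eq_abs, hf, abs_mul]
    have e1 : |v x - spow m⁻¹ (v₀ x)| ≤ Mv + M0 ^ m⁻¹ := by
      refine (abs_sub _ _).trans (add_le_add h1 ?_)
      rw [abs_spow (by positivity) (v₀ x)]
      exact Real.rpow_le_rpow (abs_nonneg _) h2 (by positivity)
    have e2 : |spow m (v x) - v₀ x| ≤ Mv ^ m + M0 := by
      refine (abs_sub _ _).trans (add_le_add ?_ h2)
      rw [abs_spow hm0 (v x)]
      exact Real.rpow_le_rpow (abs_nonneg _) h1 hm0.le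
    exact mul_le_mul e1 e2 (abs_nonneg _) (by positivity)
  have hfint : Integrable f (volume.restrict Ω) :=
    Integrable.mono' (integrable_const _) hfm.aestronglyMeasurable hbound
  have hpt2 : ∀ x, 2 ^ (1-m) * |v x - spow m⁻¹ (v₀ x)| ^ (m+1) ≤ f x := by
    intro x
    have hkm := key_m hm (v x) (spow m⁻¹ (v₀ x))
    rwa [spow_spow_inv hm] at hkm
  have h1 : (∫ x in Ω, 2 ^ (1-m) * |v x - spow m⁻¹ (v₀ x)| ^ (m+1)) ≤ ∫ x in Ω, f x :=
    integral_mono_of_nonneg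
      (Filter.Eventually.of_forall fun x => by positivity) hfint
      (Filter.Eventually.of_forall hpt2)
  rw [integral_const_mul] at h1
  have hchain : 2 ^ (1-m) * (∫ x in Ω, |v x - spow m⁻¹ (v₀ x)| ^ (m+1)) ≤ ε * T := by
    have heq' : ∫ x in Ω, f x
        = ε * -(fracPairing d s p (fun x => spow m (v x)) (fun x => spow m (v x) - v₀ x)) := by
      rw [hf]; linarith [heq]
    have hp1 : p⁻¹ * T ≤ T := by
      have : p⁻¹ ≤ 1 := by rw [inv_le_one_iff₀]; right; exact hp.le
      nlinarith
    calc 2 ^ (1-m) * (∫ x in Ω, |v x - spow m⁻¹ (v₀ x)| ^ (m+1))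
        ≤ ∫ x in Ω, f x := h1
      _ = ε * -(fracPairing d s p (fun x => spow m (v x))
            (fun x => spow m (v x) - v₀ x)) := heq'
      _ ≤ ε * (p⁻¹ * T) := mul_le_mul_of_nonneg_left hfrac hε.le
      _ ≤ ε * T := mul_le_mul_of_nonneg_left hp1 hε.le
  have h2m : (2:ℝ) ^ (m-1) * 2 ^ (1-m) = 1 := by
    rw [← Real.rpow_add two_pos]; norm_num
  calc (∫ x in Ω, |v x - spow m⁻¹ (v₀ x)| ^ (m+1))
      = ((2:ℝ) ^ (m-1) * 2 ^ (1-m)) * ∫ x in Ω, |v x - spow m⁻¹ (v₀ x)| ^ (m+1) := by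
        rw [h2m, one_mul]
    _ = 2 ^ (m-1) * (2 ^ (1-m) * ∫ x in Ω, |v x - spow m⁻¹ (v₀ x)| ^ (m+1)) := by ring
    _ ≤ 2 ^ (m-1) * (ε * T) := mul_le_mul_of_nonneg_left hchain hC.le
    _ = 2 ^ (m-1) * ε * T := by ring
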